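/- arXiv:2506.05295 — 3 statements merged into one kernel-verified Lean document; each statement's English description precedes it below -/
import Mathlib

section
/- Self-consistency lower bound via Berry–Esseen: let X_1,…,X_n be i.i.d. with P(X_i = 1) = (1+Δ)/2 and P(X_i = −1) = (1−Δ)/2 where 0 < Δ < 10^{-5}. If 1/Δ ≤ n ≤ 1/Δ², then P(Σ_{i=1}^n X_i < 0) ≥ 0.01. -/
open Finset

variable {n : ℕ}

def cnt (x : Fin n → Bool) : ℕ := (univ.filter fun i => x i).card

lemma cnt_le (x : Fin n → Bool) : cnt x ≤ n := by
  simpa [cnt] using (card_filter_le univ fun i => x i)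

lemma cnt_not (x : Fin n → Bool) : cnt (fun i => !(x i)) = n - cnt x := by
  have : (univ.filter fun i => !(x i)) = univ \ (univ.filter fun i => x i) := by
    ext i; simp
  simp only [cnt, this, card_sdiff_of_subset (filter_subset _ _), card_univ, Fintype.card_fin]

lemma card_lt_eq_card_gt :
    (univ.filter fun x : Fin n → Bool => 2 * cnt x < n).card
      = (univ.filter fun x : Fin n → Bool => n < 2 * cnt x).card := by
  apply Finset.card_bij' (fun (x : Fin n → Bool) _ => fun i => !(x i))
      (fun (x : Fin n → Bool) _ => fun i => !(x i))
  · intro x hx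
    simp only [mem_filter, mem_univ, true_and] at hx ⊢
    rw [cnt_not]
    omega
  · intro x hx
    simp only [mem_filter, mem_univ, true_and] at hx ⊢
    rw [cnt_not]
    have := cnt_le x
    omega
  · intro x _; funext i; simp
  · intro x _; funext i; simp

lemma sum_zero_offdiag {i j : Fin n} (hij : i ≠ j) :
    ∑ x : Fin n → Bool, ((if x i then (1:ℝ) else -1) * (if x j then (1:ℝ) else -1)) = 0 := by
  apply Finset.sum_ninvolution (fun x => Function.update x i (!(x i)))
  · intro x
    rw [Function.update_self, Function.update_of_ne (Ne.symm hij)]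
    by_cases h : x i <;> by_cases h2 : x j <;> simp [h, h2]
  · intro x _ heq
    have := congrFun heq i
    simp at this
  · intro x; exact mem_univ _
  · intro x
    funext t
    by_cases h : t = i
    · subst h; simp
    · simp [Function.update_of_ne h]

lemma sum_pm (x : Fin n → Bool) :
    ∑ i, (if x i then (1:ℝ) else -1) = 2 * cnt x - n := by
  have h : ∀ i, (if x i then (1:ℝ) else -1) = 2 * (if x i then (1:ℝ) else 0) - 1 := by
    intro i; by_cases h : x i <;> norm_num [h]
  rw [Finset.sum_congr rfl fun i _ => h i, Finset.sum_sub_distrib, ← Finset.mul_sum,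
    Finset.sum_boole]
  simp [cnt]

lemma card_fun_bool : Fintype.card (Fin n → Bool) = 2 ^ n := by
  simp

lemma sum_sq : ∑ x : Fin n → Bool, ((n:ℝ) - 2 * cnt x)^2 = (n:ℝ) * 2^n := by
  have h1 : ∀ x : Fin n → Bool, ((n:ℝ) - 2*cnt x)^2
      = ∑ i, ∑ j, ((if x i then (1:ℝ) else -1) * (if x j then (1:ℝ) else -1)) := by
    intro x
    rw [← Finset.sum_mul_sum]
    rw [sum_pm]; ring
  rw [show (∑ x : Fin n → Bool, ((n:ℝ) - 2 * cnt x)^2) = ∑ x : Fin n → Bool, ∑ i, ∑ j, ((if x i then (1:ℝ) else -1) * (if x j then (1:ℝ) else -1)) from Finset.sum_congr rfl fun x _ => h1 x, Finset.sum_comm]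
  have h2 : ∀ i : Fin n, ∑ x : Fin n → Bool, ∑ j,
      ((if x i then (1:ℝ) else -1) * (if x j then (1:ℝ) else -1)) = 2^n := by
    intro i
    rw [Finset.sum_comm]
    rw [Finset.sum_eq_single_of_mem i (mem_univ i)
      (fun j _ hj => sum_zero_offdiag (Ne.symm hj))]
    have : ∀ x : Fin n → Bool, ((if x i then (1:ℝ) else -1) * (if x i then (1:ℝ) else -1)) = 1 := by
      intro x; by_cases h : x i <;> norm_num [h]
    rw [Finset.sum_congr rfl fun x _ => this x, Finset.sum_const, card_univ, card_fun_bool]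
    simp
  rw [Finset.sum_congr rfl fun i _ => h2 i, Finset.sum_const, card_univ, Fintype.card_fin]
  simp [mul_comm]

lemma count_eq_choose (k : ℕ) :
    (univ.filter fun x : Fin n → Bool => cnt x = k).card = n.choose k := by
  have hh := Finset.card_powersetCard k (univ : Finset (Fin n))
  rw [card_univ, Fintype.card_fin] at hh
  rw [← hh]
  apply Finset.card_bij' (fun (x : Fin n → Bool) (_ : x ∈ univ.filter fun x => cnt x = k) => univ.filter fun i => x i = true)
      (fun (s : Finset (Fin n)) (_ : s ∈ powersetCard k univ) => fun i => i ∈ s)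
  · intro x hx; simp only [mem_filter, mem_univ, true_and, cnt] at hx
    simp [Finset.mem_powersetCard_univ, hx]
    exact (Finset.mem_filter.mp hx).2
  · intro s hs; simp only [Finset.mem_powersetCard_univ] at hs
    rw [mem_filter]; simp [cnt, hs]
  · intro x hx; funext i; simp
  · intro s hs; ext i; simp

lemma choose_ratio {m : ℕ} (hm : 2 * m = n) (hm2 : 50000 ≤ m) :
    ∀ j : ℕ, j ≤ 10 → (1 - (j:ℝ)/1000) * n.choose m ≤ n.choose (m - j) := by
  intro j
  induction j with
  | zero => intro _; simp
  | succ j ih =>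
    intro hj
    have ihj := ih (by omega)
    -- identity
    have hid : n.choose (m - j) * (m - j) = n.choose (m - (j+1)) * (m + j + 1) := by
      have h1 : m - (j+1) + 1 = m - j := by omega
      have h2 : n - (m - (j+1)) = m + j + 1 := by omega
      have := Nat.choose_succ_right_eq n (m - (j+1))
      rw [h1, h2] at this
      omega
    have hjm : j ≤ m := by omega
    have hidR : (n.choose (m - j) : ℝ) * ((m:ℝ) - j) = (n.choose (m - (j+1)) : ℝ) * ((m:ℝ) + j + 1) := by
      have := congrArg (fun t : ℕ => (t:ℝ)) hid
      push_cast [Nat.cast_sub hjm] at this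
      linarith
    have hC : (0:ℝ) ≤ (n.choose m : ℝ) := by positivity
    have hkey : (1 - ((j:ℝ)+1)/1000) * ((m:ℝ) + j + 1) ≤ (1 - (j:ℝ)/1000) * ((m:ℝ) - j) := by
      have hj9 : (j:ℝ) ≤ 9 := by exact_mod_cast Nat.le_of_lt_succ (by omega)
      have hm2R : (50000:ℝ) ≤ m := by exact_mod_cast hm2
      nlinarith [sq_nonneg ((j:ℝ))]
    have hmjnn : (0:ℝ) ≤ (m:ℝ) - j := by
      have : (j:ℝ) ≤ m := by exact_mod_cast hjm
      linarith
    have hpos : (0:ℝ) < (m:ℝ) + j + 1 := by positivity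
    have hstep : (1 - ((j:ℝ)+1)/1000) * (n.choose m : ℝ) * ((m:ℝ) + j + 1)
        ≤ (n.choose (m - (j+1)) : ℝ) * ((m:ℝ) + j + 1) := by
      calc (1 - ((j:ℝ)+1)/1000) * (n.choose m : ℝ) * ((m:ℝ) + j + 1)
          ≤ (1 - (j:ℝ)/1000) * ((m:ℝ) - j) * (n.choose m : ℝ) := by nlinarith
        _ ≤ (n.choose (m - j) : ℝ) * ((m:ℝ) - j) := by nlinarith
        _ = (n.choose (m - (j+1)) : ℝ) * ((m:ℝ) + j + 1) := hidR
    have := le_of_mul_le_mul_right hstep hpos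
    push_cast at this ⊢
    linarith

lemma central_le (hn : 100000 ≤ n) :
    (((univ : Finset (Fin n → Bool)).filter fun x => 2 * cnt x = n).card : ℝ)
      ≤ 0.1 * 2^n := by
  rcases Nat.even_or_odd n with ⟨m, hm⟩ | hodd
  · have hm' : 2 * m = n := by omega
    have hm2 : 50000 ≤ m := by omega
    have hset : ((univ : Finset (Fin n → Bool)).filter fun x => 2 * cnt x = n)
        = (univ.filter fun x => cnt x = m) := by
      apply filter_congr; intro x _; constructor <;> intro h <;> omega
    rw [hset, count_eq_choose]
    -- disjoint sum bound
    have hsum : ∑ j ∈ range 11, (n.choose (m - j) : ℝ) ≤ 2^n := by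
      have hnat : ∑ j ∈ range 11, ((univ : Finset (Fin n → Bool)).filter fun x => cnt x = m - j).card ≤ 2^n := by
        rw [← Finset.card_biUnion]
        · calc _ ≤ (univ : Finset (Fin n → Bool)).card := card_le_card (subset_univ _)
            _ = 2^n := by rw [card_univ, card_fun_bool]
        · intro a ha b hb hab
          simp only [coe_range, Set.mem_Iio, mem_coe, mem_range] at ha hb
          refine Finset.disjoint_left.mpr ?_
          intro x hx1 hx2
          simp only [mem_filter, mem_univ, true_and] at hx1 hx2
          exact hab (by omega)
      calc ∑ j ∈ range 11, (n.choose (m - j) : ℝ)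
          = ((∑ j ∈ range 11, ((univ : Finset (Fin n → Bool)).filter fun x => cnt x = m - j).card : ℕ) : ℝ) := by
            push_cast
            refine Finset.sum_congr rfl fun j _ => ?_
            rw [count_eq_choose]
        _ ≤ ((2^n : ℕ) : ℝ) := by exact_mod_cast hnat
        _ = 2^n := by push_cast; ring
    have hlow : ∀ j ∈ range 11, (0.99:ℝ) * n.choose m ≤ n.choose (m - j) := by
      intro j hj
      have hj10 : j ≤ 10 := by simpa using Nat.le_of_lt_succ (mem_range.mp hj)
      have := choose_ratio hm' hm2 j hj10
      have hjR : (j:ℝ) ≤ 10 := by exact_mod_cast hj10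
      have hC : (0:ℝ) ≤ (n.choose m : ℝ) := by positivity
      nlinarith
    have h11 : (11:ℝ) * (0.99 * n.choose m) ≤ 2^n := by
      calc (11:ℝ) * (0.99 * n.choose m) = ∑ _j ∈ range 11, (0.99:ℝ) * n.choose m := by
            rw [Finset.sum_const, card_range]; push_cast; ring
        _ ≤ ∑ j ∈ range 11, (n.choose (m - j) : ℝ) := Finset.sum_le_sum hlow
        _ ≤ 2^n := hsum
    nlinarith
  · have : ((univ : Finset (Fin n → Bool)).filter fun x => 2 * cnt x = n) = ∅ := by
      apply filter_false_of_mem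
      intro x _
      obtain ⟨k, hk⟩ := hodd
      omega
    rw [this]
    simp
    positivity
lemma partition :
    ((univ : Finset (Fin n → Bool)).filter fun x => 2 * cnt x < n).card
    + ((univ : Finset (Fin n → Bool)).filter fun x => n < 2 * cnt x).card
    + ((univ : Finset (Fin n → Bool)).filter fun x => 2 * cnt x = n).card = 2^n := by
  classical
  have h1 := Finset.card_filter_add_card_filter_not
    (s := (univ : Finset (Fin n → Bool))) (p := fun x => 2 * cnt x < n)
  have h2 := Finset.card_filter_add_card_filter_not
    (s := (univ : Finset (Fin n → Bool)).filter fun x => ¬ 2 * cnt x < n)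
    (p := fun x => n < 2 * cnt x)
  rw [Finset.filter_filter, Finset.filter_filter] at h2
  have e1 : ((univ : Finset (Fin n → Bool)).filter fun x => ¬ 2 * cnt x < n ∧ n < 2 * cnt x)
      = (univ : Finset (Fin n → Bool)).filter fun x => n < 2 * cnt x := by
    apply filter_congr; intro x _; constructor
    · exact fun h => h.2
    · exact fun h => ⟨by omega, h⟩
  have e2 : ((univ : Finset (Fin n → Bool)).filter fun x => ¬ 2 * cnt x < n ∧ ¬ n < 2 * cnt x)
      = (univ : Finset (Fin n → Bool)).filter fun x => 2 * cnt x = n := by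
    apply filter_congr; intro x _; constructor
    · intro h; omega
    · intro h; omega
  rw [e1, e2] at h2
  have hcard : (univ : Finset (Fin n → Bool)).card = 2^n := by
    rw [card_univ]; simp
  omega

lemma bad_card {t : ℕ} (ht : n < t * t) :
    (((univ : Finset (Fin n → Bool)).filter fun x => 2 * cnt x + 2*t < n).card : ℝ)
      ≤ 2^n / 4 := by
  classical
  set B := (univ : Finset (Fin n → Bool)).filter fun x => 2 * cnt x + 2*t < n with hB
  have hterm : ∀ x ∈ B, (4*(n:ℝ)+1) ≤ ((n:ℝ) - 2*cnt x)^2 := by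
    intro x hx
    rw [hB, mem_filter] at hx
    have hx' : 2 * cnt x + 2*t + 1 ≤ n := by omega
    have h2 : (2*(t:ℝ)+1) ≤ (n:ℝ) - 2*cnt x := by
      have hc : ((2 * cnt x + 2*t + 1 : ℕ) : ℝ) ≤ (n:ℝ) := by exact_mod_cast hx'
      push_cast at hc
      linarith
    have htR : (n:ℝ) + 1 ≤ (t:ℝ)*t := by exact_mod_cast ht
    nlinarith [sq_nonneg ((t:ℝ))]
  have hsum : (B.card : ℝ) * (4*n+1) ≤ (n:ℝ)*2^n := by
    calc (B.card : ℝ) * (4*n+1) = ∑ _x ∈ B, (4*(n:ℝ)+1) := by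
          rw [Finset.sum_const]; push_cast; ring
      _ ≤ ∑ x ∈ B, ((n:ℝ) - 2*cnt x)^2 := Finset.sum_le_sum hterm
      _ ≤ ∑ x : Fin n → Bool, ((n:ℝ) - 2*cnt x)^2 := by
          apply Finset.sum_le_sum_of_subset_of_nonneg (subset_univ _)
          intro x _ _; positivity
      _ = (n:ℝ)*2^n := sum_sq
  have h2n : (0:ℝ) < 2^n := by positivity
  nlinarith
lemma exp_num : (0.135:ℝ) ≤ Real.exp (-2.0001) := by
  have he1 : Real.exp 1 < 2.7182818286 := Real.exp_one_lt_d9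
  have he1' : (0:ℝ) < Real.exp 1 := Real.exp_pos 1
  have he0 : Real.exp 0.0001 ≤ 1/(1-0.0001) := by
    have h := Real.add_one_le_exp (-0.0001)
    have hp : (0:ℝ) < Real.exp 0.0001 := Real.exp_pos _
    rw [Real.exp_neg] at h
    rw [le_div_iff₀ (by norm_num)]
    have : (1 - 0.0001 : ℝ) ≤ (Real.exp 0.0001)⁻¹ := by norm_num at h ⊢; linarith
    calc Real.exp 0.0001 * (1 - 0.0001) ≤ Real.exp 0.0001 * (Real.exp 0.0001)⁻¹ := by
          apply mul_le_mul_of_nonneg_left this (le_of_lt hp)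
      _ = 1 := mul_inv_cancel₀ (ne_of_gt hp)
  have hsplit : Real.exp (2.0001:ℝ) = Real.exp 1 * Real.exp 1 * Real.exp 0.0001 := by
    rw [← Real.exp_add, ← Real.exp_add]; norm_num
  have hb : Real.exp (2.0001:ℝ) ≤ 7.4 := by
    rw [hsplit]
    have h2 : Real.exp 1 * Real.exp 1 ≤ 2.7182818286 * 2.7182818286 := by nlinarith
    have h3 : (0:ℝ) < Real.exp 1 * Real.exp 1 := by positivity
    have h4 : Real.exp 0.0001 ≤ 1.0002 := by
      calc Real.exp 0.0001 ≤ 1/(1-0.0001) := he0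
        _ ≤ 1.0002 := by norm_num
    nlinarith
  rw [show (-2.0001 : ℝ) = -(2.0001:ℝ) by norm_num, Real.exp_neg,
    le_inv_comm₀ (by norm_num) (Real.exp_pos _)]
  calc Real.exp (2.0001:ℝ) ≤ 7.4 := hb
    _ ≤ (0.135:ℝ)⁻¹ := by norm_num

lemma weight_lb (Δ : ℝ) (h0 : 0 < Δ) (h1 : Δ < 1e-5) {n k t : ℕ}
    (hn2 : (n:ℝ) ≤ 1/Δ^2) (ht : (t:ℝ) ≤ 1/Δ + 1)
    (hk1 : 2*k < n) (hk2 : n ≤ 2*k + 2*t) :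
    0.0675 * (1/2)^n ≤ ((1+Δ)/2)^k * ((1-Δ)/2)^(n-k) := by
  have hΔ1 : Δ < 1 := by linarith
  have hdec : ((1+Δ)/2)^k * ((1-Δ)/2)^(n-k)
      = (1/2:ℝ)^n * ((1-Δ^2)^k * (1-Δ)^(n-2*k)) := by
    obtain ⟨m, rfl⟩ : ∃ m, n = 2*k+m := ⟨n-2*k, by omega⟩
    have e1 : 2*k+m-k = k+m := by omega
    have e2 : 2*k+m-(2*k) = m := by omega
    rw [e1, e2]
    calc ((1+Δ)/2)^k * ((1-Δ)/2)^(k+m)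
        = (((1+Δ)/2) * ((1-Δ)/2))^k * ((1-Δ)/2)^m := by rw [pow_add, mul_pow]; ring
      _ = ((1-Δ^2) * ((1/2)*(1/2)))^k * ((1-Δ) * (1/2))^m := by congr 2 <;> ring
      _ = (1/2:ℝ)^(2*k+m) * ((1-Δ^2)^k * (1-Δ)^m) := by
          rw [mul_pow, mul_pow, mul_pow, pow_add, two_mul, pow_add]
          ring
  rw [hdec]
  have hA : (1/2:ℝ) ≤ (1-Δ^2)^k := by
    have h := one_add_mul_le_pow (a := -Δ^2) (by nlinarith) k
    have hkn : (k:ℝ) * Δ^2 ≤ 1/2 := by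
      have hk : (2*(k:ℝ)) ≤ (n:ℝ) := by exact_mod_cast le_of_lt hk1
      have hΔ2 : (0:ℝ) < Δ^2 := by positivity
      have hnd : (n:ℝ) * Δ^2 ≤ 1 := by
        calc (n:ℝ) * Δ^2 ≤ (1/Δ^2) * Δ^2 := by nlinarith
          _ = 1 := by field_simp
      nlinarith
    calc (1/2:ℝ) ≤ 1 + (k:ℝ) * (-Δ^2) := by linarith
      _ ≤ (1 + (-Δ^2))^k := h
      _ = (1-Δ^2)^k := by ring_nf
  have hB : (0.135:ℝ) ≤ (1-Δ)^(n-2*k) := by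
    set y := Δ/(1-Δ) with hy
    have hΔpos : (0:ℝ) < 1 - Δ := by linarith
    have hyn : 0 ≤ y := by positivity
    have hexp : Real.exp (-y) ≤ 1 - Δ := by
      have h := Real.add_one_le_exp y
      have h2 : 1/(1-Δ) ≤ Real.exp y := by
        calc 1/(1-Δ) = y + 1 := by rw [hy]; field_simp; ring
          _ ≤ Real.exp y := h
      rw [Real.exp_neg, inv_le_comm₀ (Real.exp_pos y) hΔpos, ← one_div]
      exact h2
    have hm : ((n - 2*k : ℕ):ℝ) * y ≤ 2.0001 := by
      have hmt : ((n - 2*k : ℕ):ℝ) ≤ 2*(t:ℝ) := by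
        have h' : (n - 2*k : ℕ) ≤ 2*t := by omega
        exact_mod_cast h'
      have hty : (t:ℝ) * Δ ≤ 1 + Δ := by
        have h' := mul_le_mul_of_nonneg_right ht (le_of_lt h0)
        calc (t:ℝ) * Δ ≤ (1/Δ + 1) * Δ := h'
          _ = 1 + Δ := by field_simp [ne_of_gt h0]
      have hmd : ((n - 2*k : ℕ):ℝ) * Δ ≤ 2 + 2*Δ := by nlinarith
      have hyd : y * (1-Δ) = Δ := by rw [hy]; field_simp
      nlinarith [mul_nonneg (Nat.cast_nonneg (n - 2*k)) hyn]
    calc (0.135:ℝ) ≤ Real.exp (-2.0001) := exp_num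
      _ ≤ Real.exp (-(((n - 2*k : ℕ):ℝ) * y)) := by
          apply Real.exp_le_exp.mpr; linarith
      _ = Real.exp (-y) ^ (n - 2*k) := by
          rw [← Real.exp_nat_mul]; congr 1; ring
      _ ≤ (1-Δ)^(n-2*k) := pow_le_pow_left₀ (Real.exp_nonneg _) hexp _
  have hAnn : (0:ℝ) ≤ (1-Δ^2)^k := by
    apply pow_nonneg; nlinarith
  calc (0.0675:ℝ) * (1/2)^n = (1/2:ℝ)^n * (1/2 * 0.135) := by ring
    _ ≤ (1/2:ℝ)^n * ((1-Δ^2)^k * (1-Δ)^(n-2*k)) := by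
        apply mul_le_mul_of_nonneg_left _ (by positivity)
        exact mul_le_mul hA hB (by norm_num) hAnn

open MeasureTheory

/-- Self-consistency lower bound via Berry–Esseen: for i.i.d. `±1` variables with
`P(X = 1) = (1+Δ)/2`, `P(X = -1) = (1-Δ)/2`, `0 < Δ < 10⁻⁵`, and `1/Δ ≤ n ≤ 1/Δ²`,
the sum is negative with probability at least `0.01`. -/
theorem self_consistency_lower (Δ : ℝ) (h0 : 0 < Δ) (h1 : Δ < 1e-5)
    (hle : ENNReal.ofReal ((1 + Δ)/2) ≤ 1)
    (n : ℕ) (hn1 : 1/Δ ≤ (n : ℝ)) (hn2 : (n : ℝ) ≤ 1/Δ^2) :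
    ENNReal.ofReal 0.01 ≤
      (Measure.pi fun _ : Fin n =>
        (PMF.bernoulli (Real.toNNReal ((1 + Δ)/2)) (ENNReal.coe_le_one_iff.mp hle)).toMeasure)
        {x | (∑ i, (if x i then (1:ℝ) else -1)) < 0} := by
  classical
  have hΔ1 : Δ < 1 := by linarith
  have hp0 : (0:ℝ) ≤ (1+Δ)/2 := by linarith
  have hq0 : (0:ℝ) ≤ (1-Δ)/2 := by linarith
  -- n is large
  have hn5 : 100000 ≤ n := by
    have h100 : (100000:ℝ) ≤ 1/Δ := by
      rw [le_div_iff₀ h0]; nlinarith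
    have : (100000:ℝ) ≤ (n:ℝ) := le_trans h100 hn1
    exact_mod_cast this
  set t := n.sqrt + 1 with htdef
  have htlt : n < t * t := Nat.lt_succ_sqrt n
  have htR : (t:ℝ) ≤ 1/Δ + 1 := by
    have hs : (n.sqrt : ℝ) * (n.sqrt : ℝ) ≤ (n:ℝ) := by exact_mod_cast Nat.sqrt_le n
    have hΔinv : (0:ℝ) < 1/Δ := by positivity
    have h0s : (0:ℝ) ≤ (n.sqrt:ℝ) := Nat.cast_nonneg _
    have hn2' : (n:ℝ) ≤ (1/Δ)*(1/Δ) := by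
      rw [show (1/Δ)*(1/Δ) = 1/Δ^2 by ring]; exact hn2
    have hsb : (n.sqrt:ℝ) ≤ 1/Δ := by
      nlinarith [sq_nonneg ((n.sqrt:ℝ) - 1/Δ)]
    rw [htdef]; push_cast; linarith
  -- rewrite the event
  have hevent : {x : Fin n → Bool | (∑ i, (if x i then (1:ℝ) else -1)) < 0}
      = {x : Fin n → Bool | 2 * cnt x < n} := by
    ext x
    simp only [Set.mem_setOf_eq, sum_pm, sub_neg]
    exact ⟨fun h => by exact_mod_cast h, fun h => by exact_mod_cast h⟩
  rw [hevent]
  set G := (univ : Finset (Fin n → Bool)).filter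
    (fun x => 2 * cnt x < n ∧ n ≤ 2 * cnt x + 2*t) with hG
  set μ := Measure.pi (fun _ : Fin n =>
    (PMF.bernoulli (Real.toNNReal ((1 + Δ)/2)) (ENNReal.coe_le_one_iff.mp hle)).toMeasure) with hμ
  -- value of singleton measure
  have hsub : ENNReal.ofReal ((1+Δ)/2) + ENNReal.ofReal ((1-Δ)/2) = 1 := by
    rw [← ENNReal.ofReal_add hp0 hq0]
    rw [show (1+Δ)/2 + (1-Δ)/2 = 1 by ring]
    exact ENNReal.ofReal_one
  have hone : (1:ENNReal) - ENNReal.ofReal ((1+Δ)/2) = ENNReal.ofReal ((1-Δ)/2) := by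
    rw [← hsub, ENNReal.add_sub_cancel_left ENNReal.ofReal_ne_top]
  have hsingle : ∀ x : Fin n → Bool,
      μ {x} = ENNReal.ofReal (((1+Δ)/2)^(cnt x) * ((1-Δ)/2)^(n - cnt x)) := by
    intro x
    have hxset : ({x} : Set (Fin n → Bool)) = Set.pi Set.univ (fun i => ({x i} : Set Bool)) := by
      ext y; simp [Set.mem_pi, funext_iff]
    rw [hμ, hxset, Measure.pi_pi]
    have hb : ∀ i, (PMF.bernoulli (Real.toNNReal ((1 + Δ)/2)) (ENNReal.coe_le_one_iff.mp hle)).toMeasure ({x i} : Set Bool)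
        = if x i then ENNReal.ofReal ((1+Δ)/2) else ENNReal.ofReal ((1-Δ)/2) := by
      intro i
      rw [PMF.toMeasure_apply_singleton _ _ (measurableSet_singleton _), PMF.bernoulli_apply]
      cases hxi : x i
      · show ((1 - Real.toNNReal ((1 + Δ)/2) : NNReal) : ENNReal) = ENNReal.ofReal ((1-Δ)/2)
        rw [ENNReal.coe_sub, ENNReal.coe_one]; exact hone
      · rfl
    rw [Finset.prod_congr rfl (fun i _ => hb i), Finset.prod_ite, Finset.prod_const,
      Finset.prod_const]
    have hcard2 : ((univ : Finset (Fin n)).filter fun i => ¬ x i).card = n - cnt x := by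
      have hc : ((univ : Finset (Fin n)).filter fun i => ¬ x i)
          = univ \ ((univ : Finset (Fin n)).filter fun i => x i) := by
        ext i; simp
      rw [hc, card_sdiff_of_subset (filter_subset _ _), card_univ, Fintype.card_fin]
      rfl
    have hcard1 : ((univ : Finset (Fin n)).filter fun i => x i = true).card = cnt x := rfl
    rw [hcard1, hcard2, ← ENNReal.ofReal_pow hp0, ← ENNReal.ofReal_pow hq0,
      ← ENNReal.ofReal_mul (pow_nonneg hp0 _)]
  -- counting lower bound for G
  have hGcard : (0.2:ℝ) * 2^n ≤ G.card := by
    have hpart := partition (n := n)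
    have hLU := card_lt_eq_card_gt (n := n)
    have hE := central_le (n := n) hn5
    have hBc := bad_card (n := n) (t := t) htlt
    have h2L : 2 * ((univ : Finset (Fin n → Bool)).filter fun x => 2 * cnt x < n).card
        + ((univ : Finset (Fin n → Bool)).filter fun x => 2 * cnt x = n).card = 2^n := by
      omega
    have hLR : (0.45:ℝ) * 2^n ≤ (((univ : Finset (Fin n → Bool)).filter fun x => 2 * cnt x < n).card : ℝ) := by
      have hcast : 2 * ((((univ : Finset (Fin n → Bool)).filter fun x => 2 * cnt x < n).card : ℝ))
          + (((univ : Finset (Fin n → Bool)).filter fun x => 2 * cnt x = n).card : ℝ) = 2^n := by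
        exact_mod_cast h2L
      linarith
    have hsubL : ((univ : Finset (Fin n → Bool)).filter fun x => 2 * cnt x < n)
        ⊆ G ∪ ((univ : Finset (Fin n → Bool)).filter fun x => 2 * cnt x + 2*t < n) := by
      intro x hx
      simp only [mem_filter, mem_univ, true_and] at hx
      by_cases hc : n ≤ 2 * cnt x + 2*t
      · exact mem_union_left _ (by simp [hG, hx, hc])
      · exact mem_union_right _ (by simp only [mem_filter, mem_univ, true_and]; omega)
    have hcards : (((univ : Finset (Fin n → Bool)).filter fun x => 2 * cnt x < n).card : ℝ)
        ≤ (G.card : ℝ) + (((univ : Finset (Fin n → Bool)).filter fun x => 2 * cnt x + 2*t < n).card : ℝ) := by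
      have := le_trans (card_le_card hsubL) (card_union_le _ _)
      exact_mod_cast this
    linarith
  -- per-point weight bound and conclusion
  have hGsub : (↑G : Set (Fin n → Bool)) ⊆ {x : Fin n → Bool | 2 * cnt x < n} := by
    intro x hx
    simp only [hG, coe_filter, Set.mem_setOf_eq, mem_univ, true_and] at hx
    exact hx.1
  calc ENNReal.ofReal 0.01
      ≤ ∑ x ∈ G, ENNReal.ofReal (0.0675 * (1/2)^n) := by
        rw [Finset.sum_const, nsmul_eq_mul]
        rw [show ((G.card : ℕ) : ENNReal) = ENNReal.ofReal ((G.card : ℕ) : ℝ) by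
          rw [ENNReal.ofReal_natCast]]
        rw [← ENNReal.ofReal_mul (by positivity)]
        apply ENNReal.ofReal_le_ofReal
        have hpow : (2:ℝ)^n * (1/2)^n = 1 := by
          rw [← mul_pow]; norm_num
        have hc0 : (0:ℝ) ≤ 0.0675 * (1/2)^n := by positivity
        calc (0.01:ℝ) ≤ (0.2 * 2^n) * (0.0675 * (1/2)^n) := by nlinarith
          _ ≤ (G.card : ℝ) * (0.0675 * (1/2)^n) := by
              exact mul_le_mul_of_nonneg_right hGcard hc0
    _ ≤ ∑ x ∈ G, μ {x} := by
        apply Finset.sum_le_sum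
        intro x hx
        simp only [hG, mem_filter, mem_univ, true_and] at hx
        rw [hsingle x]
        apply ENNReal.ofReal_le_ofReal
        exact weight_lb Δ h0 h1 hn2 htR hx.1 hx.2
    _ = μ (⋃ x ∈ G, {x}) := by
        rw [measure_biUnion_finset]
        · intro x _ y _ hxy
          simp [Set.disjoint_singleton_left, hxy]
        · intro x _
          exact .of_discrete
    _ ≤ μ {x : Fin n → Bool | 2 * cnt x < n} := by
        apply measure_mono
        intro x hx
        simp only [Set.mem_iUnion, Set.mem_singleton_iff] at hx
        obtain ⟨y, hy, rfl⟩ := hx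
        exact hGsub hy
end

section
/- Separation between self-consistency and best-of-n: for every Δ ∈ (0, 10^{-7}), there exists a distribution p on a two-element set {1,2} with gap p(1) − p(2) = Δ such that: (a) best-of-n with n = ⌈10/Δ⌉ samples outputs the correct answer 1 with probability at least 0.99 (i.e., answer 1 appears among the samples), while (b) self-consistency (majority vote) with any n ≤ 1/Δ² samples fails with probability at least 0.01. -/
open MeasureTheory

lemma meas_all {n : ℕ} (S : Set (Fin n → Bool)) : MeasurableSet S := by
  have hsing : ∀ x : Fin n → Bool, MeasurableSet ({x} : Set (Fin n → Bool)) := by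
    intro x
    have : ({x} : Set (Fin n → Bool)) = Set.univ.pi (fun i => {x i}) := by
      ext y; simp [funext_iff]
    rw [this]
    exact MeasurableSet.univ_pi (fun i => MeasurableSet.singleton _)
  have : S = ⋃ x ∈ S, {x} := by simp
  rw [this]
  exact MeasurableSet.biUnion (Set.to_countable S) (fun x _ => hsing x)

open Classical in
lemma pi_meas (p : PMF Bool) (n : ℕ) (S : Set (Fin n → Bool)) :
    (Measure.pi fun _ : Fin n => p.toMeasure) S
      = ∑ x ∈ Finset.univ.filter (· ∈ S), ∏ i, p (x i) := by
  have h1 : S = ⋃ x ∈ Finset.univ.filter (· ∈ S), ({x} : Set (Fin n → Bool)) := by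
    ext y; simp
  conv_lhs => rw [h1]
  rw [measure_biUnion_finset]
  · refine Finset.sum_congr rfl fun x _ => ?_
    have : ({x} : Set (Fin n → Bool)) = Set.univ.pi (fun i => {x i}) := by
      ext y; simp [funext_iff]
    rw [this, Measure.pi_pi]
    refine Finset.prod_congr rfl fun i _ => ?_
    exact p.toMeasure_apply_singleton _ (MeasurableSet.singleton _)
  · intro x _ y _ hxy
    simp [Set.disjoint_singleton, hxy]
  · exact fun x _ => MeasurableSet.singleton x

def ee (c : Bool) : ℤ := if c = true then -1 else 1

def dd {n : ℕ} (x : Fin n → Bool) : ℤ := ∑ i, ee (x i)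

lemma dd_cons {n : ℕ} (b : Bool) (y : Fin n → Bool) :
    dd (Fin.cons b y) = ee b + dd y := by
  unfold dd
  rw [Fin.sum_univ_succ]
  simp [Fin.cons_zero, Fin.cons_succ]

lemma sum_pi_succ {n : ℕ} (f : (Fin (n+1) → Bool) → ℤ) :
    ∑ x : Fin (n+1) → Bool, f x
      = ∑ b : Bool, ∑ y : Fin n → Bool, f (Fin.cons b y) := by
  rw [← Equiv.sum_comp (Fin.consEquiv (fun _ => Bool)) f, Fintype.sum_prod_type]
  rfl

lemma sum_dd (n : ℕ) : ∑ x : Fin n → Bool, dd x = 0 := by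
  induction n with
  | zero => simp [dd]
  | succ n ih =>
      rw [sum_pi_succ]
      simp only [dd_cons, Finset.sum_add_distrib, Finset.sum_const, ih]
      simp [ee, Fintype.sum_bool]

lemma sum_dd_sq (n : ℕ) : ∑ x : Fin n → Bool, (dd x)^2 = n * 2^n := by
  induction n with
  | zero => simp [dd]
  | succ n ih =>
      rw [sum_pi_succ]
      have hb : ∀ b : Bool, (ee b)^2 = 1 := by decide
      have hcard : (Finset.univ : Finset (Fin n → Bool)).card = 2^n := by
        simp [Fintype.card_fun]
      calc ∑ b : Bool, ∑ y : Fin n → Bool, (dd (Fin.cons b y))^2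
          = ∑ b : Bool, ∑ y : Fin n → Bool, ((ee b)^2 + 2 * ee b * dd y + (dd y)^2) := by
            refine Finset.sum_congr rfl fun b _ => Finset.sum_congr rfl fun y _ => ?_
            rw [dd_cons]; ring
        _ = ∑ b : Bool, (2^n * (ee b)^2 + 2 * ee b * (∑ y : Fin n → Bool, dd y)
              + ∑ y : Fin n → Bool, (dd y)^2) := by
            refine Finset.sum_congr rfl fun b _ => ?_
            rw [Finset.sum_add_distrib, Finset.sum_add_distrib, Finset.sum_const, hcard,
              ← Finset.mul_sum]
            push_cast
            ring
        _ = ∑ _b : Bool, ((2:ℤ)^n + n * 2^n) := by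
            refine Finset.sum_congr rfl fun b _ => ?_
            rw [hb, sum_dd, ih]; ring
        _ = (n+1) * 2^(n+1) := by rw [Fintype.sum_bool]; push_cast; ring

lemma dd_eq {n : ℕ} (x : Fin n → Bool) :
    dd x = ((Finset.univ.filter fun i => x i = false).card : ℤ)
         - ((Finset.univ.filter fun i => x i = true).card : ℤ) := by
  unfold dd
  rw [← Finset.sum_filter_add_sum_filter_not Finset.univ (fun i => x i = true)]
  have h1 : ∀ i ∈ Finset.univ.filter (fun i => x i = true), ee (x i) = -1 := by
    intro i hi; simp only [Finset.mem_filter] at hi; simp [ee, hi.2]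
  have h2 : ∀ i ∈ Finset.univ.filter (fun i => ¬ x i = true), ee (x i) = 1 := by
    intro i hi; simp only [Finset.mem_filter] at hi; simp [ee, hi.2]
  rw [Finset.sum_congr rfl h1, Finset.sum_congr rfl h2, Finset.sum_const, Finset.sum_const]
  have h3 : (Finset.univ.filter fun i => ¬ x i = true)
      = (Finset.univ.filter fun i => x i = false) := by
    apply Finset.filter_congr; intro i _; simp
  rw [h3]
  simp; ring

lemma card_filters {n : ℕ} (x : Fin n → Bool) :
    (Finset.univ.filter fun i => x i = true).card
      + (Finset.univ.filter fun i => x i = false).card = n := by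
  have h3 : (Finset.univ.filter fun i => ¬ x i = true)
      = (Finset.univ.filter fun i => x i = false) := by
    apply Finset.filter_congr; intro i _; simp
  rw [← h3, Finset.card_filter_add_card_filter_not, Finset.card_univ, Fintype.card_fin]

lemma dd_flip {n : ℕ} (x : Fin n → Bool) : dd (fun i => ! x i) = - dd x := by
  unfold dd
  rw [← Finset.sum_neg_distrib]
  refine Finset.sum_congr rfl fun i _ => ?_
  cases h : x i <;> simp [ee, h]

lemma count_T (n m : ℕ) (hm : 4 * n + 1 ≤ m^2) :
    2^n ≤ 4 * (Finset.univ.filter (fun x : Fin n → Bool => 0 ≤ dd x ∧ dd x ≤ (m:ℤ))).card := by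
  set A := Finset.univ.filter (fun x : Fin n → Bool => 0 ≤ dd x) with hA
  set B := Finset.univ.filter (fun x : Fin n → Bool => (m:ℤ) < dd x) with hB
  set T := Finset.univ.filter (fun x : Fin n → Bool => 0 ≤ dd x ∧ dd x ≤ (m:ℤ)) with hT
  have hcardu : (Finset.univ : Finset (Fin n → Bool)).card = 2^n := by
    rw [Finset.card_univ, Fintype.card_fun]; simp
  have hAc : (Finset.univ.filter (fun x : Fin n → Bool => ¬ 0 ≤ dd x)).card ≤ A.card := by
    apply Finset.card_le_card_of_injOn (fun x => fun i => ! x i)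
    · intro x hx
      simp only [hA, Finset.mem_coe, Finset.mem_filter, Finset.mem_univ, true_and, not_le] at hx ⊢
      rw [dd_flip]; omega
    · intro x _ y _ hxy
      funext i
      have := congrFun hxy i
      simpa using this
  have hA2 : 2^n ≤ 2 * A.card := by
    have := Finset.card_filter_add_card_filter_not
      (s := (Finset.univ : Finset (Fin n → Bool))) (p := fun x => 0 ≤ dd x)
    rw [hcardu] at this
    rw [← hA] at this
    omega
  have hBsum : (B.card : ℤ) * (4 * n + 1) ≤ n * 2^n := by
    calc (B.card : ℤ) * (4 * n + 1) = B.card • ((4 * n + 1 : ℤ)) := by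
          simp [nsmul_eq_mul]
      _ ≤ ∑ x ∈ B, (dd x)^2 := by
          apply Finset.card_nsmul_le_sum
          intro x hx
          simp only [hB, Finset.mem_filter] at hx
          have h1 : (m:ℤ) + 1 ≤ dd x := hx.2
          nlinarith [hx.2, hm]
      _ ≤ ∑ x : Fin n → Bool, (dd x)^2 := by
          apply Finset.sum_le_sum_of_subset_of_nonneg (Finset.filter_subset _ _)
          intro x _ _; positivity
      _ = n * 2^n := sum_dd_sq n
  have hB4 : 4 * B.card ≤ 2^n := by
    have h2 : (4:ℤ) * B.card * (4 * n + 1) ≤ (4*n) * 2^n := by nlinarith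
    have h3 : (4:ℤ) * B.card * (4 * n + 1) ≤ (4*n+1) * 2^n := by
      nlinarith [pow_pos (by norm_num : (0:ℤ) < 2) n]
    have h4 : (4:ℤ) * B.card ≤ 2^n := by
      have hpos : (0:ℤ) < 4 * n + 1 := by positivity
      nlinarith
    exact_mod_cast h4
  have hAT : A ⊆ T ∪ B := by
    intro x hx
    simp only [hA, hT, hB, Finset.mem_filter, Finset.mem_union, Finset.mem_univ, true_and] at hx ⊢
    rcases le_or_gt (dd x) (m:ℤ) with h | h
    · exact Or.inl ⟨hx, h⟩
    · exact Or.inr h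
  have := Finset.card_le_card hAT
  have := Finset.card_union_le T B
  omega

lemma exp_neg_le_one_sub (x : ℝ) (h0 : 0 ≤ x) (h1 : x < 1) :
    Real.exp (-(x/(1-x))) ≤ 1 - x := by
  have hpos : 0 < 1 - x := by linarith
  have h2 : x/(1-x) + 1 ≤ Real.exp (x/(1-x)) := Real.add_one_le_exp _
  have h3 : 1/(1-x) ≤ Real.exp (x/(1-x)) := by
    have he : 1/(1-x) = x/(1-x) + 1 := by field_simp; ring
    linarith
  have h4 : 1 ≤ (1-x) * Real.exp (x/(1-x)) := by
    calc (1:ℝ) = (1-x)*(1/(1-x)) := by field_simp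
      _ ≤ (1-x) * Real.exp (x/(1-x)) := mul_le_mul_of_nonneg_left h3 hpos.le
  rw [Real.exp_neg, inv_eq_one_div, div_le_iff₀ (Real.exp_pos _)]
  nlinarith

lemma exp_le_one_div (t : ℝ) (h0 : 0 ≤ t) (h1 : t < 1) :
    Real.exp t ≤ 1/(1-t) := by
  have hpos : 0 < 1 - t := by linarith
  have h2 : 1 - t ≤ Real.exp (-t) := by
    have := Real.add_one_le_exp (-t); linarith
  have hmul : Real.exp (-t) * Real.exp t = 1 := by
    rw [← Real.exp_add]; simp
  rw [le_div_iff₀ hpos]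
  nlinarith [Real.exp_pos t, mul_le_mul_of_nonneg_right h2 (Real.exp_pos t).le]

lemma exp_303 : Real.exp 3.03 ≤ 25 := by
  have h1 : Real.exp 3.03 = Real.exp 1 ^ (3:ℕ) * Real.exp 0.03 := by
    rw [← Real.exp_nat_mul, ← Real.exp_add]; norm_num
  have h2 : Real.exp 1 ≤ 2.7182818286 := Real.exp_one_lt_d9.le
  have h3 : Real.exp 0.03 ≤ 1/(1-0.03) := exp_le_one_div 0.03 (by norm_num) (by norm_num)
  have h4 : Real.exp 1 ^ (3:ℕ) ≤ 2.7182818286^(3:ℕ) :=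
    pow_le_pow_left₀ (Real.exp_pos 1).le h2 3
  calc Real.exp 3.03 = Real.exp 1 ^ (3:ℕ) * Real.exp 0.03 := h1
    _ ≤ 2.7182818286^(3:ℕ) * (1/(1-0.03)) :=
        mul_le_mul h4 h3 (Real.exp_pos _).le (by positivity)
    _ ≤ 25 := by norm_num

lemma K_ge (Δ : ℝ) (n m : ℕ) (h0 : 0 < Δ) (h1 : Δ < 1e-7)
    (hn : (n:ℝ)*Δ^2 ≤ 1) (hm : (m:ℝ)*Δ ≤ 2.01) :
    (0.04:ℝ) ≤ (1-Δ^2)^n * (1-Δ)^m := by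
  have hΔ1 : Δ < 1 := by linarith
  have hΔ2 : Δ^2 < 1e-14 := by nlinarith
  have e1 : Real.exp (-(Δ^2/(1-Δ^2))) ≤ 1 - Δ^2 :=
    exp_neg_le_one_sub _ (by positivity) (by nlinarith)
  have e2 : Real.exp (-(Δ/(1-Δ))) ≤ 1 - Δ :=
    exp_neg_le_one_sub _ h0.le hΔ1
  have p1 : Real.exp (-((n:ℝ) * (Δ^2/(1-Δ^2)))) ≤ (1-Δ^2)^n := by
    rw [show -((n:ℝ) * (Δ^2/(1-Δ^2))) = (n:ℝ) * (-(Δ^2/(1-Δ^2))) by ring, Real.exp_nat_mul]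
    exact pow_le_pow_left₀ (Real.exp_pos _).le e1 n
  have p2 : Real.exp (-((m:ℝ) * (Δ/(1-Δ)))) ≤ (1-Δ)^m := by
    rw [show -((m:ℝ) * (Δ/(1-Δ))) = (m:ℝ) * (-(Δ/(1-Δ))) by ring, Real.exp_nat_mul]
    exact pow_le_pow_left₀ (Real.exp_pos _).le e2 m
  have d1 : (n:ℝ) * (Δ^2/(1-Δ^2)) ≤ 1.01 := by
    rw [mul_div_assoc'] at *
    rw [div_le_iff₀ (by nlinarith)]
    nlinarith
  have d2 : (m:ℝ) * (Δ/(1-Δ)) ≤ 2.02 := by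
    rw [mul_div_assoc']
    rw [div_le_iff₀ (by linarith)]
    nlinarith
  have q1 : Real.exp (-(3.03:ℝ))
      ≤ Real.exp (-((n:ℝ) * (Δ^2/(1-Δ^2)))) * Real.exp (-((m:ℝ)*(Δ/(1-Δ)))) := by
    rw [← Real.exp_add]
    apply Real.exp_le_exp.mpr
    linarith
  have q2 : (0.04:ℝ) ≤ Real.exp (-(3.03:ℝ)) := by
    rw [Real.exp_neg]
    have := inv_anti₀ (Real.exp_pos 3.03) exp_303
    calc (0.04:ℝ) = (25:ℝ)⁻¹ := by norm_num
      _ ≤ (Real.exp 3.03)⁻¹ := this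
  calc (0.04:ℝ) ≤ Real.exp (-(3.03:ℝ)) := q2
    _ ≤ Real.exp (-((n:ℝ) * (Δ^2/(1-Δ^2)))) * Real.exp (-((m:ℝ)*(Δ/(1-Δ)))) := q1
    _ ≤ (1-Δ^2)^n * (1-Δ)^m :=
        mul_le_mul p1 p2 (Real.exp_pos _).le (pow_nonneg (by nlinarith) n)
/-- Separation between self-consistency and best-of-n: for every `Δ ∈ (0, 10⁻⁷)` there is a
distribution on two answers (`true` the correct one) with gap `Δ` such that best-of-n with
`n = ⌈10/Δ⌉` samples sees the correct answer with probability at least `0.99`, while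
majority vote with any `n ≤ 1/Δ²` samples fails with probability at least `0.01`. -/
theorem separation_self_consistency_best_of_n (Δ : ℝ) (h0 : 0 < Δ) (h1 : Δ < 1e-7) :
    ∃ p : PMF Bool,
      ((p true).toReal - (p false).toReal = Δ) ∧
      (ENNReal.ofReal 0.99 ≤
        (Measure.pi fun _ : Fin (⌈10/Δ⌉₊) => p.toMeasure) {x | ∃ i, x i = true}) ∧
      (∀ n : ℕ, (n : ℝ) ≤ 1/Δ^2 →
        ENNReal.ofReal 0.01 ≤
          (Measure.pi fun _ : Fin n => p.toMeasure)
            {x | (Finset.univ.filter fun i => x i = true).card ≤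
                 (Finset.univ.filter fun i => x i = false).card}) := by
  have hΔ1 : Δ < 1 := by linarith
  set a : ℝ := (1+Δ)/2 with ha
  set b : ℝ := (1-Δ)/2 with hb
  have ha0 : 0 ≤ a := by positivity
  have hb0 : 0 ≤ b := by simp only [hb]; linarith
  have hab : a + b = 1 := by simp [ha, hb]; ring
  refine ⟨PMF.ofFintype (fun c => if c = true then ENNReal.ofReal a else ENNReal.ofReal b) ?_, ?_, ?_, ?_⟩
  · rw [Fintype.sum_bool]
    simp only [Bool.false_eq_true, if_false, eq_self_iff_true, if_true]
    rw [← ENNReal.ofReal_add ha0 hb0, hab, ENNReal.ofReal_one]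
  · simp [PMF.ofFintype_apply, ENNReal.toReal_ofReal ha0, ENNReal.toReal_ofReal hb0, ha, hb]
    rw [ENNReal.toReal_ofReal, ENNReal.toReal_ofReal]
    ring
    linarith
    linarith
  · -- part a
    set p := PMF.ofFintype (fun c => if c = true then ENNReal.ofReal a else ENNReal.ofReal b) _ with hp
    set n := ⌈10/Δ⌉₊ with hn
    have hn7 : 7 ≤ n := by
      have h10 : (10:ℝ)/Δ ≤ n := Nat.le_ceil _
      have : (10:ℝ) < 10/Δ := by
        rw [lt_div_iff₀ h0]; nlinarith
      exact_mod_cast Nat.cast_le.mp (by push_cast; linarith : (7:ℝ) ≤ n)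
    set μ := (Measure.pi fun _ : Fin n => p.toMeasure) with hμ
    have hcompl : {x : Fin n → Bool | ∃ i, x i = true}ᶜ = ({fun _ => false} : Set (Fin n → Bool)) := by
      ext x
      simp [funext_iff]
    have hone : μ Set.univ = 1 := by
      have : IsProbabilityMeasure μ := by infer_instance
      exact this.measure_univ
    have hsingle : μ ({fun _ => false} : Set (Fin n → Bool)) = ENNReal.ofReal (b ^ n) := by
      have : ({fun _ => false} : Set (Fin n → Bool)) = Set.univ.pi (fun i => {false}) := by
        ext y; simp [funext_iff]
      rw [this, hμ, Measure.pi_pi]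
      have : ∀ i : Fin n, p.toMeasure {false} = ENNReal.ofReal b := by
        intro i
        rw [p.toMeasure_apply_singleton _ (MeasurableSet.singleton _)]
        simp [hp, PMF.ofFintype_apply]
      rw [Finset.prod_congr rfl (fun i _ => this i), Finset.prod_const, Finset.card_univ, Fintype.card_fin, ENNReal.ofReal_pow hb0]
    have hmc : ENNReal.ofReal (b ^ n)
        = 1 - μ {x : Fin n → Bool | ∃ i, x i = true} := by
      rw [← hsingle, ← hcompl,
        measure_compl (meas_all _) (measure_ne_top _ _), hone]
    have hb2 : b ≤ 1/2 := by rw [hb]; linarith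
    have hbn : b ^ n ≤ 0.01 := by
      calc b ^ n ≤ (1/2:ℝ) ^ n := pow_le_pow_left₀ hb0 hb2 n
        _ ≤ (1/2:ℝ) ^ 7 := pow_le_pow_of_le_one (by norm_num) (by norm_num) hn7
        _ ≤ 0.01 := by norm_num
    have hle : 1 - μ {x : Fin n → Bool | ∃ i, x i = true} ≤ ENNReal.ofReal 0.01 := by
      rw [← hmc]; exact ENNReal.ofReal_le_ofReal hbn
    have h2 := tsub_le_iff_right.mp hle
    have h99 : ENNReal.ofReal 0.99 = 1 - ENNReal.ofReal 0.01 := by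
      rw [← ENNReal.ofReal_one, ← ENNReal.ofReal_sub _ (by norm_num)]; norm_num
    rw [h99]
    exact tsub_le_iff_left.mpr h2
  · -- part b
    intro n hnd
    classical
    set p := PMF.ofFintype (fun c => if c = true then ENNReal.ofReal a else ENNReal.ofReal b) _ with hp
    set m := Nat.sqrt (4*n) + 1 with hmdef
    have hpv : ∀ c : Bool, p c = ENNReal.ofReal (if c = true then a else b) := by
      intro c; cases c <;> simp [hp]
    set S := {x : Fin n → Bool | (Finset.univ.filter fun i => x i = true).card ≤
        (Finset.univ.filter fun i => x i = false).card} with hSdef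
    rw [pi_meas]
    -- abbreviations
    set c1 : (Fin n → Bool) → ℕ := fun x => (Finset.univ.filter fun i => x i = true).card with hc1
    set c0 : (Fin n → Bool) → ℕ := fun x => (Finset.univ.filter fun i => x i = false).card with hc0
    have hΔsq : (0:ℝ) < Δ^2 := by positivity
    have hΔa : (0:ℝ) ≤ 1 - Δ^2 := by nlinarith
    have hΔb : (0:ℝ) ≤ 1 - Δ := by linarith
    -- product = ofReal of real weight
    have hprod : ∀ x : Fin n → Bool,
        (∏ i, p (x i)) = ENNReal.ofReal (a ^ c1 x * b ^ c0 x) := by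
      intro x
      have h1 : ∀ i ∈ (Finset.univ : Finset (Fin n)), p (x i)
          = ENNReal.ofReal (if x i = true then a else b) := fun i _ => hpv (x i)
      rw [Finset.prod_congr rfl h1, ← ENNReal.ofReal_prod_of_nonneg]
      · congr 1
        rw [← Finset.prod_filter_mul_prod_filter_not Finset.univ (fun i => x i = true)]
        have e1 : ∀ i ∈ Finset.univ.filter (fun i => x i = true),
            (if x i = true then a else b) = a := by
          intro i hi; simp only [Finset.mem_filter] at hi; simp [hi.2]
        have e2 : ∀ i ∈ Finset.univ.filter (fun i => ¬ x i = true),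
            (if x i = true then a else b) = b := by
          intro i hi; simp only [Finset.mem_filter] at hi; simp [hi.2]
        have e3 : (Finset.univ.filter fun i => ¬ x i = true)
            = (Finset.univ.filter fun i => x i = false) := by
          apply Finset.filter_congr; intro i _; simp
        rw [Finset.prod_congr rfl e1, Finset.prod_congr rfl e2, Finset.prod_const,
          Finset.prod_const, e3]
      · intro i _
        split_ifs
        · exact ha0
        · exact hb0
    rw [Finset.sum_congr rfl (fun x _ => hprod x), ← ENNReal.ofReal_sum_of_nonneg
      (fun x _ => mul_nonneg (pow_nonneg ha0 _) (pow_nonneg hb0 _))]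
    apply ENNReal.ofReal_le_ofReal
    -- now a purely real inequality
    set T := Finset.univ.filter (fun x : Fin n → Bool => 0 ≤ dd x ∧ dd x ≤ (m:ℤ)) with hT
    have hm2 : 4*n+1 ≤ m^2 := by
      rw [hmdef, sq]
      exact Nat.succ_le_of_lt (by simpa [Nat.succ_eq_add_one] using Nat.lt_succ_sqrt (4*n))
    have hcount := count_T n m hm2
    set lb : ℝ := (1/2:ℝ)^n * ((1-Δ^2)^n * (1-Δ)^m) with hlb
    have hlb0 : 0 ≤ lb := by
      apply mul_nonneg (by positivity)
      exact mul_nonneg (pow_nonneg hΔa _) (pow_nonneg hΔb _)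
    have hTsub : ∀ x ∈ T, x ∈ Finset.univ.filter (· ∈ S) := by
      intro x hx
      simp only [hT, Finset.mem_filter, Finset.mem_univ, true_and] at hx ⊢
      have hdd' : dd x = (c0 x : ℤ) - (c1 x : ℤ) := dd_eq x
      have h := hx.1
      rw [hdd'] at h
      have : (c1 x : ℤ) ≤ (c0 x : ℤ) := by omega
      exact_mod_cast this
    have hab2 : a * b = (1-Δ^2)/4 := by rw [ha, hb]; ring
    have hlow : ∀ x ∈ T, lb ≤ a ^ c1 x * b ^ c0 x := by
      intro x hx
      simp only [hT, Finset.mem_filter, Finset.mem_univ, true_and] at hx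
      obtain ⟨h0d, h1d⟩ := hx
      have hdd' : dd x = (c0 x : ℤ) - (c1 x : ℤ) := dd_eq x
      rw [hdd'] at h0d h1d
      have hc : c1 x + c0 x = n := card_filters x
      have hle : c1 x ≤ c0 x := by omega
      set k : ℕ := c0 x - c1 x with hk
      have hk0 : c0 x = c1 x + k := by omega
      have hkm : k ≤ m := by omega
      have hc1n : c1 x ≤ n := by omega
      have hn2 : n = 2*(c1 x) + k := by omega
      have key : a ^ c1 x * b ^ c0 x = ((1-Δ^2)/4)^(c1 x) * ((1-Δ)/2)^k := by
        rw [hk0, pow_add,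
          show a ^ c1 x * (b ^ c1 x * b ^ k) = (a*b)^(c1 x) * b^k from by rw [mul_pow]; ring,
          hab2, hb]
      have key2 : (1/2:ℝ)^n * ((1-Δ^2)^(c1 x) * (1-Δ)^k)
          = ((1-Δ^2)/4)^(c1 x) * ((1-Δ)/2)^k := by
        rw [hn2, pow_add, pow_mul, mul_mul_mul_comm, ← mul_pow, ← mul_pow]
        norm_num
        congr 1 <;> · congr 1; ring
      rw [key, ← key2, hlb]
      apply mul_le_mul_of_nonneg_left _ (by positivity)
      apply mul_le_mul
      · exact pow_le_pow_of_le_one hΔa (by nlinarith) hc1n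
      · exact pow_le_pow_of_le_one hΔb (by linarith) hkm
      · exact pow_nonneg hΔb _
      · exact pow_nonneg hΔa _
    have hTsum : (T.card : ℝ) * lb ≤ ∑ x ∈ T, a ^ c1 x * b ^ c0 x := by
      have := Finset.card_nsmul_le_sum T _ lb hlow
      simpa [nsmul_eq_mul] using this
    have hsub : ∑ x ∈ T, a ^ c1 x * b ^ c0 x
        ≤ ∑ x ∈ Finset.univ.filter (· ∈ S), a ^ c1 x * b ^ c0 x := by
      apply Finset.sum_le_sum_of_subset_of_nonneg
      · intro x hx; exact hTsub x hx
      · intro x _ _; exact mul_nonneg (pow_nonneg ha0 _) (pow_nonneg hb0 _)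
    -- numeric bounds
    have hn1 : (n:ℝ) * Δ^2 ≤ 1 := by
      have h := mul_le_mul_of_nonneg_right hnd (le_of_lt hΔsq)
      have h2 : 1/Δ^2 * Δ^2 = 1 := by field_simp
      linarith [h2 ▸ h]
    have hm1 : (m:ℝ) * Δ ≤ 2.01 := by
      have hs2 : ((Nat.sqrt (4*n) : ℝ))^2 ≤ 4*n := by
        have := Nat.sqrt_le' (4*n)
        exact_mod_cast this
      have h4n : (4*n : ℝ) ≤ 4/Δ^2 := by
        have h41 : (4:ℝ)/Δ^2 = 4*(1/Δ^2) := by ring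
        rw [h41]
        linarith
      have hs : ((Nat.sqrt (4*n) : ℝ)) ≤ 2/Δ := by
        have hq : ((Nat.sqrt (4*n) : ℝ))^2 ≤ (2/Δ)^2 := by
          rw [div_pow]
          calc ((Nat.sqrt (4*n) : ℝ))^2 ≤ 4*n := hs2
            _ ≤ 4/Δ^2 := h4n
            _ = 2^2/Δ^2 := by norm_num
        exact (pow_le_pow_iff_left₀ (Nat.cast_nonneg (α := ℝ) (Nat.sqrt (4*n)))
          (by positivity) (by norm_num)).mp hq
      have hmr : (m:ℝ) = (Nat.sqrt (4*n) : ℝ) + 1 := by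
        rw [hmdef]; push_cast; ring
      have : (m:ℝ) * Δ ≤ (2/Δ + 1) * Δ := by
        apply mul_le_mul_of_nonneg_right _ h0.le
        rw [hmr]; linarith
      have h2d : (2/Δ + 1) * Δ = 2 + Δ := by field_simp
      rw [h2d] at this
      linarith
    have hK := K_ge Δ n m h0 h1 hn1 hm1
    have hTcard : (2:ℝ)^n ≤ 4 * T.card := by
      have : ((2^n : ℕ) : ℝ) ≤ ((4 * T.card : ℕ) : ℝ) := (Nat.cast_le (α := ℝ)).mpr hcount
      push_cast at this
      linarith
    have h2n : (2:ℝ)^n * (1/2:ℝ)^n = 1 := by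
      rw [← mul_pow]; norm_num
    have hstep : (0.01:ℝ) ≤ (2:ℝ)^n/4 * lb := by
      have he : (2:ℝ)^n/4 * lb = ((2:ℝ)^n * (1/2:ℝ)^n) * (((1-Δ^2)^n * (1-Δ)^m)/4) := by
        rw [hlb]; ring
      rw [he, h2n, one_mul]
      linarith
    have main : (0.01:ℝ) ≤ ∑ x ∈ T, a ^ c1 x * b ^ c0 x := by
      calc (0.01:ℝ) ≤ (2:ℝ)^n/4 * lb := hstep
        _ ≤ (T.card : ℝ) * lb := by
            apply mul_le_mul_of_nonneg_right _ hlb0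
            linarith
        _ ≤ ∑ x ∈ T, a ^ c1 x * b ^ c0 x := hTsum
    refine le_trans main (Finset.sum_le_sum_of_subset_of_nonneg ?_ ?_)
    · intro x hx
      simp only [Finset.mem_filter, Finset.mem_univ, true_and]
      exact (Finset.mem_filter.mp (hTsub x hx)).2
    · intro x _ _
      exact mul_nonneg (pow_nonneg ha0 _) (pow_nonneg hb0 _)
end

section
/- Johnson–Lindenstrauss-type near-orthogonal family: for any N ≥ 2 and any d ≥ 32·ln N, there exist unit-norm vectors γ_1,…,γ_N ∈ ℝ^d such that |⟨γ_i, γ_j⟩| ≤ 1/2 for all i ≠ j. -/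
open scoped RealInnerProductSpace

open Finset

namespace NOF

variable {d : ℕ}

def W (z : Fin d → Bool) : ℕ := (univ.filter fun i => z i = true).card

def D (x y : Fin d → Bool) : ℕ := (univ.filter fun i => x i ≠ y i).card

def Good (x y : Fin d → Bool) : Prop := d ≤ 4 * D x y ∧ 4 * D x y ≤ 3 * d

instance (x y : Fin d → Bool) : Decidable (Good x y) := by unfold Good; infer_instance

lemma D_symm (x y : Fin d → Bool) : D x y = D y x := by
  unfold D; congr 1; apply Finset.filter_congr; intro i _; simp [ne_comm]

lemma Good_symm {x y : Fin d → Bool} (h : Good x y) : Good y x := by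
  unfold Good at *; rwa [D_symm]

lemma cardW_le (k : ℕ) :
    (univ.filter fun z : Fin d → Bool => W z = k).card ≤ d.choose k := by
  have h := Finset.card_le_card_of_injOn
    (s := univ.filter fun z : Fin d → Bool => W z = k)
    (t := Finset.powersetCard k univ)
    (f := fun z : Fin d → Bool => univ.filter fun i => z i = true) ?_ ?_
  · simpa [Finset.card_powersetCard] using h
  · intro z hz
    simp only [Finset.mem_coe, mem_filter, mem_univ, true_and] at hz
    simp only [Finset.mem_coe, Finset.mem_powersetCard]
    exact ⟨Finset.filter_subset _ _, hz⟩
  · intro z hz z' hz' h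
    funext i
    have := Finset.ext_iff.mp h i
    simp only [mem_filter, mem_univ, true_and] at this
    cases hzi : z i <;> cases hzi' : z' i <;> simp_all

lemma W_le (z : Fin d → Bool) : W z ≤ d := by
  simpa [W] using Finset.card_filter_le univ (fun i => z i = true)

/-- lower tail bound -/
lemma tail_bound :
    3 ^ (d - (d-1)/4) * (univ.filter fun z : Fin d → Bool => 4 * W z < d).card ≤ 4 ^ d := by
  set m := (d-1)/4 with hm
  have hstep : (univ.filter fun z : Fin d → Bool => 4 * W z < d).card
      = ∑ k ∈ range (m+1), ((univ.filter fun z : Fin d → Bool => 4 * W z < d).filter fun z => W z = k).card := by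
    apply Finset.card_eq_sum_card_fiberwise (f := W) (t := range (m+1))
    intro z hz
    simp only [Finset.mem_coe, mem_filter, mem_univ, true_and] at hz
    simp only [Finset.mem_coe, mem_range, Nat.lt_succ_iff, hm]
    rw [Nat.le_div_iff_mul_le (by norm_num)]
    omega
  calc 3 ^ (d - m) * (univ.filter fun z : Fin d → Bool => 4 * W z < d).card
      = ∑ k ∈ range (m+1), 3 ^ (d - m) * ((univ.filter fun z : Fin d → Bool => 4 * W z < d).filter fun z => W z = k).card := by
        rw [hstep, Finset.mul_sum]
    _ ≤ ∑ k ∈ range (m+1), 3 ^ (d - k) * d.choose k := by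
        apply Finset.sum_le_sum
        intro k hk
        simp only [mem_range, Nat.lt_succ_iff] at hk
        apply Nat.mul_le_mul
        · exact Nat.pow_le_pow_right (by norm_num) (by omega)
        · refine le_trans (Finset.card_le_card ?_) (cardW_le k)
          intro z hz
          simp only [mem_filter, mem_univ, true_and] at *
          tauto
    _ ≤ ∑ k ∈ range (d+1), 3 ^ (d - k) * d.choose k := by
        apply Finset.sum_le_sum_of_subset
        apply Finset.range_subset_range.mpr
        have : m ≤ d := le_trans (Nat.div_le_self _ _) (Nat.sub_le _ _)
        omega
    _ = 4 ^ d := by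
        have h := add_pow (1 : ℕ) 3 d
        norm_num at h
        rw [← h]


lemma W_not (z : Fin d → Bool) : W (fun i => !(z i)) = d - W z := by
  unfold W
  have h := Finset.card_filter_add_card_filter_not (s := (univ : Finset (Fin d)))
    (p := fun i => z i = true)
  have : (univ.filter fun i => (!z i) = true) = (univ.filter fun i => ¬ (z i = true)) := by
    apply Finset.filter_congr; intro i _; cases z i <;> simp
  rw [this]
  simp only [Finset.card_univ, Fintype.card_fin] at h
  omega

lemma upper_eq_lower :
    (univ.filter fun z : Fin d → Bool => 3 * d < 4 * W z).card
      = (univ.filter fun z : Fin d → Bool => 4 * W z < d).card := by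
  apply Finset.card_nbij' (i := fun z => fun i => !(z i)) (j := fun z => fun i => !(z i))
  · intro z hz
    simp only [Finset.mem_coe, mem_filter, mem_univ, true_and] at *
    rw [W_not]
    have := W_le z
    omega
  · intro z hz
    simp only [Finset.mem_coe, mem_filter, mem_univ, true_and] at *
    rw [W_not]
    have := W_le z
    omega
  · intro z _; funext i; simp
  · intro z _; funext i; simp

lemma D_eq_W (x y : Fin d → Bool) : D x y = W (fun i => xor (x i) (y i)) := by
  unfold D W
  congr 1
  apply Finset.filter_congr
  intro i _
  cases hx : x i <;> cases hy : y i <;> simp [hx, hy]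

lemma D_count (x : Fin d → Bool) (p : ℕ → Prop) [DecidablePred p] :
    (univ.filter fun y : Fin d → Bool => p (D x y)).card
      = (univ.filter fun z : Fin d → Bool => p (W z)).card := by
  apply Finset.card_nbij' (i := fun y => fun i => xor (x i) (y i)) (j := fun z => fun i => xor (x i) (z i))
  · intro y hy
    simp only [Finset.mem_coe, mem_filter, mem_univ, true_and] at *
    rwa [D_eq_W] at hy
  · intro z hz
    simp only [Finset.mem_coe, mem_filter, mem_univ, true_and] at *
    rw [D_eq_W]
    have : (fun i => xor (x i) (xor (x i) (z i))) = z := by funext i; cases x i <;> cases z i <;> simp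
    rwa [this]
  · intro y _; funext i; cases hx : x i <;> cases hy : y i <;> simp [hx, hy]
  · intro z _; funext i; cases hx : x i <;> cases hz : z i <;> simp [hx, hz]

lemma bad_card_le (x : Fin d → Bool) :
    (univ.filter fun y : Fin d → Bool => ¬ Good x y).card
      ≤ 2 * (univ.filter fun z : Fin d → Bool => 4 * W z < d).card := by
  have h1 : (univ.filter fun y : Fin d → Bool => ¬ Good x y)
      ⊆ (univ.filter fun y : Fin d → Bool => 4 * D x y < d)
        ∪ (univ.filter fun y : Fin d → Bool => 3 * d < 4 * D x y) := by
    intro y hy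
    simp only [mem_filter, mem_univ, true_and, mem_union, Good, not_and_or, not_le] at *
    exact hy
  calc (univ.filter fun y : Fin d → Bool => ¬ Good x y).card
      ≤ _ := Finset.card_le_card h1
    _ ≤ (univ.filter fun y : Fin d → Bool => 4 * D x y < d).card
        + (univ.filter fun y : Fin d → Bool => 3 * d < 4 * D x y).card := Finset.card_union_le _ _
    _ = (univ.filter fun z : Fin d → Bool => 4 * W z < d).card
        + (univ.filter fun z : Fin d → Bool => 3 * d < 4 * W z).card := by
        rw [D_count x (fun n => 4 * n < d), D_count x (fun n => 3 * d < 4 * n)]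
    _ = 2 * (univ.filter fun z : Fin d → Bool => 4 * W z < d).card := by
        rw [upper_eq_lower]; ring

lemma greedy (B : ℕ)
    (hB : ∀ x : Fin d → Bool, (univ.filter fun y : Fin d → Bool => ¬ Good x y).card ≤ B) :
    ∀ t : ℕ, t * B < 2 ^ d →
      ∃ f : Fin t → (Fin d → Bool), ∀ i j, i ≠ j → Good (f i) (f j) := by
  intro t
  induction t with
  | zero => exact fun _ => ⟨Fin.elim0, fun i => i.elim0⟩
  | succ t ih =>
    intro ht
    obtain ⟨f, hf⟩ := ih (lt_of_le_of_lt (Nat.mul_le_mul_right B (Nat.le_succ t)) ht)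
    set Bad := univ.biUnion (fun i : Fin t => univ.filter fun y => ¬ Good (f i) y) with hBad
    have hcard : Bad.card < (univ : Finset (Fin d → Bool)).card := by
      have h1 : Bad.card ≤ t * B := by
        calc Bad.card ≤ ∑ _i : Fin t, B :=
              le_trans Finset.card_biUnion_le (Finset.sum_le_sum fun i _ => hB (f i))
          _ = t * B := by simp [mul_comm]
      have h2 : (univ : Finset (Fin d → Bool)).card = 2 ^ d := by
        simp [Finset.card_univ]
      have h3 : t * B < (t+1) * B ∨ t * B = (t+1) * B := by
        rcases Nat.eq_zero_or_pos B with hB0 | hB0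
        · right; simp [hB0]
        · left; exact (Nat.mul_lt_mul_right hB0).mpr (Nat.lt_succ_self t)
      omega
    obtain ⟨y, hy⟩ : ∃ y, y ∉ Bad := by
      by_contra h
      push_neg at h
      exact absurd (Finset.card_le_card fun z _ => h z) (not_le.mpr hcard)
    have hyG : ∀ i : Fin t, Good (f i) y := by
      intro i
      by_contra hcon
      exact hy (Finset.mem_biUnion.mpr ⟨i, mem_univ _, Finset.mem_filter.mpr ⟨mem_univ _, hcon⟩⟩)
    refine ⟨Fin.snoc f y, ?_⟩
    intro i j hij
    rcases Fin.eq_castSucc_or_eq_last i with ⟨i', rfl⟩ | rfl <;>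
      rcases Fin.eq_castSucc_or_eq_last j with ⟨j', rfl⟩ | rfl
    · simp only [Fin.snoc_castSucc]
      exact hf i' j' (by simpa [Fin.castSucc_inj] using hij)
    · simp only [Fin.snoc_last, Fin.snoc_castSucc]
      exact hyG i'
    · simp only [Fin.snoc_last, Fin.snoc_castSucc]
      exact Good_symm (hyG j')
    · exact absurd rfl hij

lemma log_const : 1/16 + Real.log 2 < (3/4) * Real.log 3 := by
  have h0 : (2:ℝ)^16 * Real.exp 1 < 3^12 := by
    nlinarith [Real.exp_one_lt_d9]
  have h1 : Real.log ((2:ℝ)^16 * Real.exp 1) < Real.log ((3:ℝ)^12) :=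
    Real.log_lt_log (by positivity) h0
  rw [Real.log_mul (by positivity) (by positivity), Real.log_exp,
    Real.log_pow, Real.log_pow] at h1
  push_cast at h1
  linarith

lemma key_ineq (N d S : ℕ) (hN : 2 ≤ N) (hd : 32 * Real.log N ≤ (d : ℝ))
    (hS : 3 ^ (d - (d-1)/4) * S ≤ 4 ^ d) : N * (2 * S) < 2 ^ d := by
  set m := (d-1)/4 with hm
  set e := d - m with he
  have hd0 : 0 < d := by
    have hlog2 : (0:ℝ) < Real.log N :=
      Real.log_pos (by exact_mod_cast lt_of_lt_of_le one_lt_two (by exact_mod_cast hN))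
    by_contra h
    push_neg at h
    interval_cases d
    · simp at hd; nlinarith
  have hmR : (m:ℝ) ≤ (d:ℝ)/4 := by
    have h1 : ((m:ℕ):ℝ) ≤ ((d-1:ℕ):ℝ)/4 := by
      rw [hm]; exact_mod_cast Nat.cast_div_le
    have h2 : ((d-1:ℕ):ℝ) ≤ (d:ℝ) := by
      have := Nat.sub_le d 1; exact_mod_cast this
    linarith
  have hmd : m ≤ d := le_trans (Nat.div_le_self _ _) (Nat.sub_le _ _)
  have heR : (3:ℝ)/4 * d ≤ (e:ℝ) := by
    rw [he]
    rw [Nat.cast_sub hmd]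
    linarith
  -- main real inequality
  have hNr : (2:ℝ) ≤ (N:ℝ) := by exact_mod_cast hN
  have hmain : (N:ℝ) * (2 * S) * 3 ^ e < 2 ^ d * 3 ^ e := by
    have hSr : (3:ℝ) ^ e * S ≤ 4 ^ d := by exact_mod_cast hS
    have hc1 : (N:ℝ) * (2 * S) * 3 ^ e ≤ 2 * N * 4 ^ d := by
      have : (N:ℝ) * (2 * S) * 3 ^ e = 2 * N * (3 ^ e * S) := by ring
      rw [this]
      have h4 : (0:ℝ) < 2 * N := by positivity
      nlinarith [hSr, h4]
    have hc2 : (2:ℝ) * N ≤ (N:ℝ)^2 := by nlinarith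
    have hc3 : (N:ℝ)^2 ≤ Real.exp ((d:ℝ)/16) := by
      have hNpos : (0:ℝ) < N := by linarith
      have hexp : (N:ℝ)^2 = Real.exp (((2:ℕ):ℝ) * Real.log N) := by
        rw [← Real.log_pow, Real.exp_log (by positivity)]
      rw [hexp]
      apply Real.exp_le_exp.mpr
      push_cast
      linarith
    have hc5 : Real.exp ((d:ℝ)/16) * 4 ^ d < 2 ^ d * 3 ^ e := by
      have e4 : (4:ℝ) ^ d = Real.exp ((d:ℝ) * Real.log 4) := by
        rw [← Real.log_pow, Real.exp_log (by positivity)]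
      have e2 : (2:ℝ) ^ d = Real.exp ((d:ℝ) * Real.log 2) := by
        rw [← Real.log_pow, Real.exp_log (by positivity)]
      have e3 : (3:ℝ) ^ e = Real.exp ((e:ℝ) * Real.log 3) := by
        rw [← Real.log_pow, Real.exp_log (by positivity)]
      rw [e4, e2, e3, ← Real.exp_add, ← Real.exp_add]
      apply Real.exp_lt_exp.mpr
      have l4 : Real.log 4 = 2 * Real.log 2 := by
        rw [show (4:ℝ) = 2^2 by norm_num, Real.log_pow]
        push_cast; ring
      have l3 : (0:ℝ) ≤ Real.log 3 := Real.log_nonneg (by norm_num)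
      have hdr : (0:ℝ) < (d:ℝ) := by exact_mod_cast hd0
      have h6 : (3:ℝ)/4 * (d:ℝ) * Real.log 3 ≤ (e:ℝ) * Real.log 3 :=
        mul_le_mul_of_nonneg_right heR l3
      have h7 := log_const
      nlinarith [h7, hdr, l3]
    calc (N:ℝ) * (2 * S) * 3 ^ e ≤ 2 * N * 4 ^ d := hc1
      _ ≤ (N:ℝ)^2 * 4 ^ d := by
          apply mul_le_mul_of_nonneg_right hc2 (by positivity)
      _ ≤ Real.exp ((d:ℝ)/16) * 4 ^ d := by
          apply mul_le_mul_of_nonneg_right hc3 (by positivity)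
      _ < 2 ^ d * 3 ^ e := hc5
  have hfin : ((N * (2 * S) : ℕ) : ℝ) < ((2 ^ d : ℕ) : ℝ) := by
    push_cast
    exact lt_of_mul_lt_mul_right hmain (by positivity)
  exact_mod_cast hfin


noncomputable def gam (x : Fin d → Bool) : EuclideanSpace ℝ (Fin d) :=
  WithLp.toLp 2 (fun i => (if x i then 1 else -1) / Real.sqrt d)

lemma gam_norm (hd0 : 0 < d) (x : Fin d → Bool) : ‖gam x‖ = 1 := by
  have hdr : (0:ℝ) < d := by exact_mod_cast hd0
  rw [EuclideanSpace.norm_eq]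
  have hsum : ∀ i : Fin d, ‖gam x i‖ ^ 2 = 1 / d := by
    intro i
    rw [Real.norm_eq_abs, sq_abs, gam, PiLp.toLp_apply]
    rw [div_pow, Real.sq_sqrt (le_of_lt hdr)]
    congr 1
    cases x i <;> norm_num
  rw [Finset.sum_congr rfl (fun i _ => hsum i)]
  simp only [Finset.sum_const, Finset.card_univ, Fintype.card_fin, nsmul_eq_mul]
  rw [mul_one_div, div_self (ne_of_gt hdr), Real.sqrt_one]

lemma gam_inner (hd0 : 0 < d) (x y : Fin d → Bool) :
    ⟪gam x, gam y⟫ = ((d:ℝ) - 2 * D x y) / d := by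
  have hdr : (0:ℝ) < d := by exact_mod_cast hd0
  rw [PiLp.inner_apply]
  have hterm : ∀ i : Fin d,
      (inner ℝ (gam x i) (gam y i) : ℝ) = (if x i = y i then (1:ℝ) else -1) / d := by
    intro i
    simp only [gam, PiLp.toLp_apply, RCLike.inner_apply, starRingEnd_apply, star_trivial]
    rw [div_mul_div_comm, Real.mul_self_sqrt (le_of_lt hdr)]
    congr 1
    cases hx : x i <;> cases hy : y i <;> norm_num
  rw [Finset.sum_congr rfl (fun i _ => hterm i)]
  rw [← Finset.sum_div]
  congr 1
  rw [Finset.sum_ite, Finset.sum_const, Finset.sum_const]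
  have hcard : (univ.filter fun i => x i = y i).card = d - D x y := by
    have h := Finset.card_filter_add_card_filter_not (s := (univ : Finset (Fin d)))
      (p := fun i => x i = y i)
    simp only [Finset.card_univ, Fintype.card_fin] at h
    have : (univ.filter fun i => ¬ (x i = y i)) = (univ.filter fun i => x i ≠ y i) := rfl
    rw [this] at h
    unfold D
    omega
  have hDle : D x y ≤ d := by
    simpa [D] using Finset.card_filter_le univ (fun i => x i ≠ y i)
  have hfilter : (univ.filter fun i => ¬ (x i = y i)).card = D x y := rfl
  rw [hcard, hfilter]
  have : ((d - D x y : ℕ) : ℝ) = (d:ℝ) - D x y := by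
    exact Nat.cast_sub hDle
  simp only [nsmul_eq_mul, smul_eq_mul, this]
  ring

lemma good_inner (hd0 : 0 < d) {x y : Fin d → Bool} (h : Good x y) :
    |⟪gam x, gam y⟫| ≤ 1/2 := by
  have hdr : (0:ℝ) < d := by exact_mod_cast hd0
  rw [gam_inner hd0]
  have h1 : (d:ℝ) ≤ 4 * D x y := by exact_mod_cast h.1
  have h2 : (4:ℝ) * D x y ≤ 3 * d := by exact_mod_cast h.2
  rw [abs_div, abs_of_pos hdr, div_le_iff₀ hdr]
  rw [abs_le]
  constructor <;> nlinarith

end NOF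

/-- Johnson–Lindenstrauss-type near-orthogonal family: for `N ≥ 2` and `d ≥ 32·ln N`
there exist `N` unit vectors in `ℝ^d` with pairwise inner products at most `1/2`
in absolute value. -/
theorem near_orthogonal_family_exists (N d : ℕ) (hN : 2 ≤ N)
    (hd : 32 * Real.log N ≤ (d : ℝ)) :
    ∃ γ : Fin N → EuclideanSpace ℝ (Fin d),
      (∀ i, ‖γ i‖ = 1) ∧ ∀ i j, i ≠ j → |⟪γ i, γ j⟫| ≤ 1/2 := by
  classical
  have hd0 : 0 < d := by
    have hlog2 : (0:ℝ) < Real.log N :=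
      Real.log_pos (by exact_mod_cast lt_of_lt_of_le one_lt_two (by exact_mod_cast hN))
    by_contra h
    push_neg at h
    interval_cases d
    · simp at hd; nlinarith
  set S := (Finset.univ.filter fun z : Fin d → Bool => 4 * NOF.W z < d).card with hSdef
  have hS : 3 ^ (d - (d-1)/4) * S ≤ 4 ^ d := NOF.tail_bound
  have hkey : N * (2 * S) < 2 ^ d := NOF.key_ineq N d S hN hd hS
  obtain ⟨f, hf⟩ := NOF.greedy (2 * S) (fun x => NOF.bad_card_le x) N hkey
  exact ⟨fun i => NOF.gam (f i), fun i => NOF.gam_norm hd0 (f i),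
    fun i j hij => NOF.good_inner hd0 (hf i j hij)⟩
end
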